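/- Theorem (average reconstruction error bound): Let x* ∈ R^{P×T} be a movie, and suppose the sensing matrices A^(t) are uniformly RIP of order 2k with constant δ_{2k} < (4T)^{-1}. Given measurements y^(t) = A^(t)x*^(t) + z^(t) with ‖z^(t)‖₂ ≤ ε, let x̂ minimize ‖x^(0)‖₁ + ‖∇_t x‖₁ subject to ‖A^(t)x^(t) - y^(t)‖₂ ≤ ε for all t. Then for any pixel index set I with |I| ≤ k and Ī its per-frame repetition, (1/T) Σ_{t=0}^{T-1} ‖x*^(t) - x̂^(t)‖₂ ≤ C(‖x*^(0)_{I^c}‖₁ + ‖∇_t x*_{Ī^c}‖₁)/√k + C'·T·ε, where C, C' depend only on δ_{2k} and T·δ_{2k}. -/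

import Mathlib

open Finset

/-- `x` is `s`-sparse: at most `s` nonzero entries. -/
def IsSparse {n : ℕ} (s : ℕ) (x : Fin n → ℝ) : Prop :=
  (Finset.univ.filter (fun i => x i ≠ 0)).card ≤ s

/-- Forward time difference of a movie: `(∇ₜ x)^(t) = x^(t+1) - x^(t)`. -/
def gradT {P T : ℕ} (x : Fin T → Fin P → ℝ) (t : Fin (T - 1)) (p : Fin P) : ℝ :=
  x ⟨t.1 + 1, by have := t.2; omega⟩ p - x ⟨t.1, by have := t.2; omega⟩ p

/-- The objective `F(x) = ‖x^(0)‖₁ + ‖∇ₜ x‖₁`. -/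
def Fobj {P T : ℕ} [NeZero T] (x : Fin T → Fin P → ℝ) : ℝ :=
  (∑ p, |x 0 p|) + ∑ t : Fin (T - 1), ∑ p, |gradT x t p|

/-- Feasibility: `‖A^(t) x^(t) - y^(t)‖₂ ≤ ε` for all `t`. -/
def Feasible {P M T : ℕ} (A : Fin T → Matrix (Fin M) (Fin P) ℝ)
    (y : Fin T → Fin M → ℝ) (ε : ℝ) (x : Fin T → Fin P → ℝ) : Prop :=
  ∀ t, Real.sqrt (∑ j, ((A t).mulVec (x t) j - y t j) ^ 2) ≤ ε

namespace S14
variable {P m : ℕ}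

def res (S : Finset (Fin P)) (x : Fin P → ℝ) : Fin P → ℝ := fun p => if p ∈ S then x p else 0

noncomputable def nrm {m : ℕ} (u : Fin m → ℝ) : ℝ := Real.sqrt (∑ j, u j ^ 2)

lemma nrm_nonneg (u : Fin m → ℝ) : 0 ≤ nrm u := Real.sqrt_nonneg _
lemma sq_nrm (u : Fin m → ℝ) : nrm u ^ 2 = ∑ j, u j ^ 2 := Real.sq_sqrt (by positivity)

lemma sum_sq_res (S : Finset (Fin P)) (x : Fin P → ℝ) :
    ∑ p, (res S x p) ^ 2 = ∑ p ∈ S, x p ^ 2 := by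
  rw [← Finset.sum_filter_add_sum_filter_not Finset.univ (· ∈ S)]
  have h1 : ∀ p ∈ Finset.univ.filter (· ∉ S), (res S x p)^2 = 0 := by
    intro p hp; simp only [Finset.mem_filter] at hp; simp [res, hp.2]
  rw [Finset.sum_eq_zero h1, add_zero]
  rw [Finset.filter_univ_mem]
  exact Finset.sum_congr rfl fun p hp => by simp [res, hp]

lemma sum_abs_res (S : Finset (Fin P)) (x : Fin P → ℝ) :
    ∑ p, |res S x p| = ∑ p ∈ S, |x p| := by
  rw [← Finset.sum_filter_add_sum_filter_not Finset.univ (· ∈ S)]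
  have h1 : ∀ p ∈ Finset.univ.filter (· ∉ S), |res S x p| = 0 := by
    intro p hp; simp only [Finset.mem_filter] at hp; simp [res, hp.2]
  rw [Finset.sum_eq_zero h1, add_zero, Finset.filter_univ_mem]
  exact Finset.sum_congr rfl fun p hp => by simp [res, hp]

lemma res_add_sdiff {S K : Finset (Fin P)} (h : K ⊆ S) (x : Fin P → ℝ) :
    res K x + res (S \ K) x = res S x := by
  funext p
  simp only [Pi.add_apply, res, Finset.mem_sdiff]
  by_cases hK : p ∈ K
  · simp [hK, h hK]
  · by_cases hS : p ∈ S <;> simp [hK, hS]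

lemma sparse_of_support {S : Finset (Fin P)} {s : ℕ} (hcard : S.card ≤ s) {v : Fin P → ℝ}
    (h : ∀ p, p ∉ S → v p = 0) : IsSparse s v := by
  refine le_trans (Finset.card_le_card ?_) hcard
  intro p hp
  simp only [Finset.mem_filter] at hp
  by_contra hns; exact hp.2 (h p hns)

lemma sparse_res {S : Finset (Fin P)} {s : ℕ} (hcard : S.card ≤ s) (x : Fin P → ℝ) :
    IsSparse s (res S x) :=
  sparse_of_support hcard (fun p hp => by simp [res, hp])

lemma dot_res_zero {S K : Finset (Fin P)} (hd : Disjoint S K) (x y : Fin P → ℝ) :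
    ∑ p, res S x p * res K y p = 0 := by
  apply Finset.sum_eq_zero
  intro p _
  by_cases hS : p ∈ S
  · have : p ∉ K := Finset.disjoint_left.1 hd hS
    simp [res, this]
  · simp [res, hS]

/-- Restricted orthogonality from RIP. -/
lemma restricted_orth {M k : ℕ} {δ : ℝ} (B : Matrix (Fin M) (Fin P) ℝ)
    (hB : ∀ v : Fin P → ℝ, IsSparse (2*k) v →
      (1-δ) * ∑ p, v p ^2 ≤ ∑ j, B.mulVec v j ^2 ∧
        ∑ j, B.mulVec v j ^2 ≤ (1+δ) * ∑ p, v p ^2)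
    {S K : Finset (Fin P)} (hd : Disjoint S K) (hcard : S.card + K.card ≤ 2*k)
    (x y : Fin P → ℝ) :
    |∑ j, B.mulVec (res S x) j * B.mulVec (res K y) j| ≤ δ * (nrm (res S x) * nrm (res K y)) := by
  set u := res S x with hu
  set v := res K y with hv
  set a := nrm u with ha
  set b := nrm v with hb
  have hdotuv : ∑ p, u p * v p = 0 := dot_res_zero hd x y
  have step : ∀ s : ℝ, 0 < s →
      |∑ j, B.mulVec u j * B.mulVec v j| ≤ δ * (s * a^2 + (1/s) * b^2) / 2 := by
    intro s hs
    set c := Real.sqrt s with hc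
    have hc0 : 0 < c := Real.sqrt_pos.2 hs
    have hc2 : c^2 = s := Real.sq_sqrt hs.le
    set u' : Fin P → ℝ := fun p => c * u p with hu'
    set v' : Fin P → ℝ := fun p => v p / c with hv'
    have hsupp : ∀ (w : Fin P → ℝ), IsSparse (2*k) w → True := fun _ _ => trivial
    have hsp : ∀ (e1 e2 : ℝ), IsSparse (2*k) (fun p => e1 * u p + e2 * v p) := by
      intro e1 e2
      apply sparse_of_support (S := S ∪ K)
      · calc (S ∪ K).card ≤ S.card + K.card := Finset.card_union_le _ _
          _ ≤ 2*k := hcard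
      · intro p hp
        simp only [Finset.mem_union, not_or] at hp
        have h1 : u p = 0 := by simp [hu, res, hp.1]
        have h2 : v p = 0 := by simp [hv, res, hp.2]
        simp [h1, h2]
    have normsplit : ∀ (e1 e2 : ℝ), ∑ p, (e1 * u p + e2 * v p)^2
        = e1^2 * a^2 + e2^2 * b^2 := by
      intro e1 e2
      have : ∀ p, (e1 * u p + e2 * v p)^2
          = e1^2 * u p^2 + e2^2 * v p^2 + (2*e1*e2) * (u p * v p) := by intro p; ring
      simp_rw [this]
      rw [Finset.sum_add_distrib, Finset.sum_add_distrib, ← Finset.mul_sum, ← Finset.mul_sum,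
        ← Finset.mul_sum, hdotuv, sq_nrm, sq_nrm]
      ring
    have mv : ∀ (e1 e2 : ℝ) (j : Fin M),
        B.mulVec (fun p => e1 * u p + e2 * v p) j = e1 * B.mulVec u j + e2 * B.mulVec v j := by
      intro e1 e2 j
      have : (fun p => e1 * u p + e2 * v p) = e1 • u + e2 • v := by funext p; simp [Pi.add_apply]
      rw [this, Matrix.mulVec_add, Matrix.mulVec_smul, Matrix.mulVec_smul]
      simp
    have upper1 := (hB _ (hsp c (1/c))).2
    have lower1 := (hB _ (hsp c (1/c))).1
    have upper2 := (hB _ (hsp c (-(1/c)))).2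
    have lower2 := (hB _ (hsp c (-(1/c)))).1
    rw [normsplit] at upper1 lower1 upper2 lower2
    have hBsum : ∀ (e2 : ℝ), ∑ j, B.mulVec (fun p => c * u p + e2 * v p) j ^2
        = ∑ j, (c * B.mulVec u j + e2 * B.mulVec v j)^2 := by
      intro e2; exact Finset.sum_congr rfl fun j _ => by rw [mv]
    rw [hBsum] at upper1 lower1 upper2 lower2
    have expand : ∀ e2 : ℝ, ∑ j, (c * B.mulVec u j + e2 * B.mulVec v j)^2
        = c^2 * ∑ j, B.mulVec u j ^2 + e2^2 * ∑ j, B.mulVec v j^2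
          + (2*c*e2) * ∑ j, B.mulVec u j * B.mulVec v j := by
      intro e2
      rw [Finset.mul_sum, Finset.mul_sum, Finset.mul_sum, ← Finset.sum_add_distrib,
        ← Finset.sum_add_distrib]
      exact Finset.sum_congr rfl fun j _ => by ring
    rw [expand] at upper1 lower1 upper2 lower2
    set D := ∑ j, B.mulVec u j * B.mulVec v j
    have hcne : c ≠ 0 := ne_of_gt hc0
    have h1 : (1/c)^2 = 1/s := by rw [div_pow, one_pow, hc2]
    have h2 : (-(1/c))^2 = 1/s := by rw [neg_pow, div_pow]; simp [hc2]
    have h3 : 2*c*(1/c) = 2 := by field_simp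
    have h4 : 2*c*(-(1/c)) = -2 := by field_simp
    rw [h1, h3] at upper1 lower1
    rw [h2, h4] at upper2 lower2
    set Q1 := ∑ j, B.mulVec u j ^2
    set Q2 := ∑ j, B.mulVec v j ^2
    set X := c^2 * a^2 + 1/s * b^2 with hX
    have e1 : (1+δ) * X = X + δ * X := by ring
    have e2 : (1-δ) * X = X - δ * X := by ring
    rw [e1] at upper1 upper2
    rw [e2] at lower1 lower2
    have hXeq : δ * (s * a^2 + (1/s) * b^2) / 2 = δ * X / 2 := by rw [hX, hc2]
    rw [hXeq, abs_le]
    constructor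
    · linarith [upper2, lower1]
    · linarith [upper1, lower2]
  rcases eq_or_lt_of_le (nrm_nonneg u) with hA0 | hA0
  · have : u = 0 := by
      funext p
      have h2 : ∑ i, u i ^2 = 0 := by rw [← sq_nrm, ← hA0]; ring
      have := (Finset.sum_eq_zero_iff_of_nonneg (fun i _ => sq_nonneg (u i))).1 h2 p
        (Finset.mem_univ p)
      exact pow_eq_zero_iff (n := 2) (by norm_num) |>.1 this
    rw [this]
    have ha0 : a = 0 := hA0.symm
    simp only [Matrix.mulVec_zero, Pi.zero_apply, zero_mul, Finset.sum_const_zero, abs_zero,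
      ha0, zero_mul, mul_zero]
    try exact le_refl 0
  · rcases eq_or_lt_of_le (nrm_nonneg v) with hB0 | hB0
    · have : v = 0 := by
        funext p
        have h2 : ∑ i, v i ^2 = 0 := by rw [← sq_nrm, ← hB0]; ring
        have := (Finset.sum_eq_zero_iff_of_nonneg (fun i _ => sq_nonneg (v i))).1 h2 p
          (Finset.mem_univ p)
        exact pow_eq_zero_iff (n := 2) (by norm_num) |>.1 this
      rw [this]
      have hb0 : b = 0 := hB0.symm
      simp only [Matrix.mulVec_zero, Pi.zero_apply, mul_zero, Finset.sum_const_zero, abs_zero,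
        hb0, zero_mul]
      try exact le_refl 0
    · have := step (b/a) (div_pos hB0 hA0)
      have heq : (b/a) * a^2 + 1/(b/a) * b^2 = 2 * (a*b) := by
        field_simp
        ring
      rw [heq] at this
      calc |∑ j, B.mulVec u j * B.mulVec v j| ≤ δ * (2*(a*b))/2 := this
        _ = δ * (a*b) := by ring


/-- greedy top-`m` selection -/
lemma exists_top (w : Fin P → ℝ) :
    ∀ (m : ℕ) (S : Finset (Fin P)), ∃ K ⊆ S, K.card = min m S.card ∧
      ∀ p ∈ S \ K, ∀ q ∈ K, |w p| ≤ |w q| := by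
  intro m
  induction m with
  | zero => intro S; exact ⟨∅, Finset.empty_subset _, by simp, by simp⟩
  | succ m ih =>
    intro S
    rcases S.eq_empty_or_nonempty with rfl | hne
    · exact ⟨∅, Finset.empty_subset _, by simp, by simp⟩
    · obtain ⟨q₀, hq₀S, hq₀max⟩ := S.exists_max_image (fun p => |w p|) hne
      obtain ⟨K', hK'sub, hK'card, hK'prop⟩ := ih (S.erase q₀)
      refine ⟨insert q₀ K', ?_, ?_, ?_⟩
      · intro p hp
        rcases Finset.mem_insert.1 hp with rfl | hp'
        · exact hq₀S
        · exact Finset.erase_subset _ _ (hK'sub hp')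
      · have hq₀K' : q₀ ∉ K' := fun h => (Finset.mem_erase.1 (hK'sub h)).1 rfl
        rw [Finset.card_insert_of_notMem hq₀K', hK'card, Finset.card_erase_of_mem hq₀S]
        have : 1 ≤ S.card := Finset.card_pos.2 hne
        omega
      · intro p hp q hq
        have hpS : p ∈ S := (Finset.mem_sdiff.1 hp).1
        have hpK : p ∉ insert q₀ K' := (Finset.mem_sdiff.1 hp).2
        rcases Finset.mem_insert.1 hq with rfl | hq'
        · exact hq₀max p hpS
        · have hp' : p ∈ (S.erase q₀) \ K' := by
            rw [Finset.mem_sdiff, Finset.mem_erase]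
            exact ⟨⟨fun h => hpK (h ▸ Finset.mem_insert_self _ _), hpS⟩,
              fun h => hpK (Finset.mem_insert_of_mem h)⟩
          exact hK'prop p hp' q hq'

/-- ℓ² of a restriction with uniformly small entries -/
lemma nrm_res_le_of_bound {S : Finset (Fin P)} {w : Fin P → ℝ} {θ : ℝ} (hθ : 0 ≤ θ)
    (h : ∀ p ∈ S, |w p| ≤ θ) (c : ℕ) (hc : S.card ≤ c) :
    nrm (res S w) ≤ Real.sqrt c * θ := by
  have h1 : ∑ p, (res S w p)^2 ≤ (c : ℝ) * θ^2 := by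
    rw [sum_sq_res]
    calc ∑ p ∈ S, w p ^2 ≤ ∑ p ∈ S, θ^2 := by
          apply Finset.sum_le_sum
          intro p hp
          have := h p hp
          calc w p ^2 = |w p|^2 := (sq_abs _).symm
            _ ≤ θ^2 := by nlinarith [abs_nonneg (w p)]
      _ = S.card * θ^2 := by rw [Finset.sum_const, nsmul_eq_mul]
      _ ≤ (c:ℝ) * θ^2 := by
          apply mul_le_mul_of_nonneg_right _ (sq_nonneg θ)
          exact_mod_cast hc
  have h2 : (Real.sqrt c * θ)^2 = (c:ℝ) * θ^2 := by
    rw [mul_pow, Real.sq_sqrt (Nat.cast_nonneg c)]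
  apply Real.sqrt_le_sqrt at h1
  rw [nrm]
  calc Real.sqrt (∑ p, (res S w p)^2) ≤ Real.sqrt ((c:ℝ) * θ^2) := h1
    _ = Real.sqrt ((Real.sqrt c * θ)^2) := by rw [h2]
    _ = Real.sqrt c * θ := Real.sqrt_sq (by positivity)

/-- Key tail lemma: sorted-block bound, abstract form. -/
lemma tail_bound {k : ℕ} (hk : 0 < k) (F : (Fin P → ℝ) → ℝ)
    (hFadd : ∀ u v, F (u + v) = F u + F v)
    (c : ℝ) (hc : 0 ≤ c) (w : Fin P → ℝ) (S₀ : Finset (Fin P))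
    (hF : ∀ K ⊆ S₀, K.card ≤ k → |F (res K w)| ≤ c * nrm (res K w)) :
    ∀ (N : ℕ) (S : Finset (Fin P)), S ⊆ S₀ → S.card ≤ N → ∀ (θ : ℝ), 0 ≤ θ →
      (∀ p ∈ S, |w p| ≤ θ) →
      |F (res S w)| ≤ c * (Real.sqrt k * θ + (∑ p ∈ S, |w p|) / Real.sqrt k) := by
  have hsk : 0 < Real.sqrt k := Real.sqrt_pos.2 (by exact_mod_cast hk)
  intro N
  induction N with
  | zero =>
    intro S hsub hcard θ hθ hbound
    have : S = ∅ := Finset.card_eq_zero.1 (Nat.le_zero.1 hcard)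
    subst this
    have : res (∅ : Finset (Fin P)) w = 0 := by funext p; simp [res]
    rw [this]
    have hF0 : F 0 = 0 := by
      have := hFadd 0 0
      simp at this
      linarith
    rw [hF0]
    simp only [abs_zero, Finset.sum_empty, zero_div, add_zero]
    positivity
  | succ N ihN =>
    intro S hsub hcard θ hθ hbound
    by_cases hSk : S.card ≤ k
    · calc |F (res S w)| ≤ c * nrm (res S w) := hF S hsub hSk
        _ ≤ c * (Real.sqrt k * θ) :=
            mul_le_mul_of_nonneg_left (nrm_res_le_of_bound hθ hbound k hSk) hc
        _ ≤ c * (Real.sqrt k * θ + (∑ p ∈ S, |w p|) / Real.sqrt k) := by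
            apply mul_le_mul_of_nonneg_left _ hc
            have : 0 ≤ (∑ p ∈ S, |w p|) / Real.sqrt k := by
              apply div_nonneg _ hsk.le
              exact Finset.sum_nonneg fun p _ => abs_nonneg _
            linarith
    · push_neg at hSk
      obtain ⟨K, hKsub, hKcard, hKprop⟩ := exists_top w k S
      have hKk : K.card = k := by rw [hKcard]; omega
      have hKne : K.Nonempty := Finset.card_pos.1 (by omega)
      set θ' := (∑ q ∈ K, |w q|) / k with hθ'
      have hθ'0 : 0 ≤ θ' := by
        apply div_nonneg _ (Nat.cast_nonneg k)
        exact Finset.sum_nonneg fun p _ => abs_nonneg _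
      have hθ'bound : ∀ p ∈ S \ K, |w p| ≤ θ' := by
        intro p hp
        have hmin : ∀ q ∈ K, |w p| ≤ |w q| := hKprop p hp
        have : (k:ℝ) * |w p| ≤ ∑ q ∈ K, |w q| := by
          calc (k:ℝ) * |w p| = ∑ _q ∈ K, |w p| := by
                rw [Finset.sum_const, nsmul_eq_mul, hKk]
            _ ≤ ∑ q ∈ K, |w q| := Finset.sum_le_sum hmin
        rw [hθ', le_div_iff₀ (show (0:ℝ) < k by exact_mod_cast hk)]
        linarith
      have hsplit : res S w = res K w + res (S \ K) w := (res_add_sdiff hKsub w).symm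
      have hcard' : (S \ K).card ≤ N := by
        have := Finset.card_sdiff_of_subset hKsub
        omega
      have ih := ihN (S \ K) (le_trans (Finset.sdiff_subset) hsub) hcard' θ' hθ'0 hθ'bound
      have hKbound : |F (res K w)| ≤ c * (Real.sqrt k * θ) := by
        calc |F (res K w)| ≤ c * nrm (res K w) := hF K (le_trans hKsub hsub) hKk.le
          _ ≤ c * (Real.sqrt k * θ) := by
              apply mul_le_mul_of_nonneg_left _ hc
              exact nrm_res_le_of_bound hθ (fun p hp => hbound p (hKsub hp)) k hKk.le
      have hθ'k : Real.sqrt k * θ' = (∑ q ∈ K, |w q|) / Real.sqrt k := by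
        have hks : Real.sqrt k * Real.sqrt k = (k:ℝ) := Real.mul_self_sqrt (Nat.cast_nonneg k)
        rw [hθ', eq_div_iff (ne_of_gt hsk)]
        have hk0 : (k:ℝ) ≠ 0 := by positivity
        field_simp
        linear_combination (∑ q ∈ K, |w q|) * hks
      have hsum : ∑ p ∈ S, |w p| = (∑ q ∈ K, |w q|) + ∑ p ∈ S \ K, |w p| := by
        rw [add_comm, Finset.sum_sdiff_eq_sub hKsub]
        ring
      calc |F (res S w)| = |F (res K w + res (S \ K) w)| := by rw [hsplit]
        _ = |F (res K w) + F (res (S \ K) w)| := by rw [hFadd]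
        _ ≤ |F (res K w)| + |F (res (S \ K) w)| := abs_add_le _ _
        _ ≤ c * (Real.sqrt k * θ) +
            c * (Real.sqrt k * θ' + (∑ p ∈ S \ K, |w p|) / Real.sqrt k) := by
              linarith [hKbound, ih]
        _ = c * (Real.sqrt k * θ +
            ((∑ q ∈ K, |w q|) + ∑ p ∈ S \ K, |w p|) / Real.sqrt k) := by
              rw [hθ'k, add_div]; ring
        _ = c * (Real.sqrt k * θ + (∑ p ∈ S, |w p|) / Real.sqrt k) := by rw [hsum]


lemma nrm_le {u : Fin m → ℝ} {a : ℝ} (ha : 0 ≤ a) (h : ∑ j, u j ^ 2 ≤ a ^ 2) : nrm u ≤ a := by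
  rw [nrm, show a = Real.sqrt (a^2) by rw [Real.sqrt_sq ha]]
  exact Real.sqrt_le_sqrt h

lemma cs_sum (u v : Fin m → ℝ) : ∑ j, u j * v j ≤ nrm u * nrm v :=
  Real.sum_mul_le_sqrt_mul_sqrt _ _ _

lemma nrm_add_le (u v : Fin m → ℝ) : nrm (u + v) ≤ nrm u + nrm v := by
  apply nrm_le (by have := nrm_nonneg u; have := nrm_nonneg v; linarith)
  have h := cs_sum u v
  have : ∑ j, (u + v) j ^ 2 = (∑ j, u j ^2) + 2 * (∑ j, u j * v j) + ∑ j, v j ^2 := by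
    rw [Finset.mul_sum, ← Finset.sum_add_distrib, ← Finset.sum_add_distrib]
    apply Finset.sum_congr rfl; intro j _; simp only [Pi.add_apply]; ring
  rw [this, ← sq_nrm u, ← sq_nrm v]
  nlinarith [nrm_nonneg u, nrm_nonneg v]

/-- The per-frame RIP-based estimate. -/
lemma frame_est {M k : ℕ} (hk : 0 < k) {δ ε : ℝ} (hδ0 : 0 < δ) (hδ1 : δ < 1) (hε : 0 ≤ ε)
    (B : Matrix (Fin M) (Fin P) ℝ)
    (hB : ∀ v : Fin P → ℝ, IsSparse (2*k) v →
      (1-δ) * ∑ p, v p ^2 ≤ ∑ j, B.mulVec v j ^2 ∧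
        ∑ j, B.mulVec v j ^2 ≤ (1+δ) * ∑ p, v p ^2)
    (g : Fin P → ℝ) (hg : nrm (B.mulVec g) ≤ 2*ε)
    (I : Finset (Fin P)) (hI : I.card ≤ k) :
    ∃ u : ℝ, 0 ≤ u ∧
      Real.sqrt (∑ p ∈ I, g p ^2) ≤ u ∧
      u ≤ (2*Real.sqrt (1+δ)/(1-δ)) * ε
          + (Real.sqrt 2 * δ/(1-δ)) * ((∑ p ∈ Iᶜ, |g p|) / Real.sqrt k) ∧
      nrm g ≤ u + (∑ p ∈ Iᶜ, |g p|) / Real.sqrt k := by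
  have hsk : 0 < Real.sqrt k := Real.sqrt_pos.2 (by exact_mod_cast hk)
  have hks : Real.sqrt k * Real.sqrt k = (k:ℝ) := Real.mul_self_sqrt (Nat.cast_nonneg k)
  set L := ∑ p ∈ Iᶜ, |g p| with hL
  have hL0 : 0 ≤ L := Finset.sum_nonneg fun p _ => abs_nonneg _
  obtain ⟨K, hKsub, hKcard, hKprop⟩ := exists_top g k Iᶜ
  set T01 := I ∪ K with hT01
  set tl := Iᶜ \ K with htl
  have hdIK : Disjoint I K := by
    rw [Finset.disjoint_left]
    intro p hp hpK
    exact (Finset.mem_compl.1 (hKsub hpK)) hp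
  have hdT01tl : Disjoint T01 tl := by
    rw [Finset.disjoint_left]
    intro p hp hptl
    rw [htl, Finset.mem_sdiff, Finset.mem_compl] at hptl
    rcases Finset.mem_union.1 hp with h | h
    · exact hptl.1 h
    · exact hptl.2 h
  have hcardT01 : T01.card ≤ 2*k := by
    calc T01.card ≤ I.card + K.card := Finset.card_union_le _ _
      _ ≤ k + k := by
          have : K.card ≤ k := by rw [hKcard]; exact min_le_left _ _
          omega
      _ = 2*k := by ring
  have huniv : T01 ∪ tl = Finset.univ := by
    ext p
    simp only [Finset.mem_union, htl, hT01, Finset.mem_sdiff, Finset.mem_compl, Finset.mem_univ,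
      iff_true]
    by_cases hpI : p ∈ I
    · exact Or.inl (Or.inl hpI)
    · by_cases hpK : p ∈ K
      · exact Or.inl (Or.inr hpK)
      · exact Or.inr ⟨hpI, hpK⟩
  have hdecomp : res T01 g + res tl g = g := by
    funext p
    have : p ∈ T01 ∪ tl := huniv ▸ Finset.mem_univ p
    rcases Finset.mem_union.1 this with h | h
    · have h2 : p ∉ tl := Finset.disjoint_left.1 hdT01tl h
      simp [res, h, h2]
    · have h2 : p ∉ T01 := Finset.disjoint_right.1 hdT01tl h
      simp [res, h, h2]
  have hresIK : res T01 g = res I g + res K g := by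
    funext p
    by_cases hpI : p ∈ I
    · have : p ∉ K := Finset.disjoint_left.1 hdIK hpI
      simp [res, hT01, hpI, this]
    · by_cases hpK : p ∈ K <;> simp [res, hT01, hpI, hpK]
  set u := nrm (res T01 g) with hu
  have hu0 : 0 ≤ u := nrm_nonneg _
  have hu2 : u^2 = ∑ p ∈ T01, g p ^2 := by rw [hu, sq_nrm, sum_sq_res]
  refine ⟨u, hu0, ?_, ?_, ?_⟩
  · -- √(Σ_I g²) ≤ u
    rw [hu, nrm]
    apply Real.sqrt_le_sqrt
    rw [sum_sq_res]
    apply Finset.sum_le_sum_of_subset_of_nonneg Finset.subset_union_left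
    intro p _ _; exact sq_nonneg _
  · -- main RIP estimate on u
    -- the linear functional
    set F : (Fin P → ℝ) → ℝ := fun z => ∑ j, B.mulVec (res T01 g) j * B.mulVec z j with hF
    have hFadd : ∀ z w, F (z + w) = F z + F w := by
      intro z w
      rw [hF]
      simp only [Matrix.mulVec_add, Pi.add_apply]
      rw [← Finset.sum_add_distrib]
      exact Finset.sum_congr rfl fun j _ => by ring
    -- sparse bound for F on subsets of tl
    have hsplit2 : ∀ z : Fin P → ℝ, F z =
        (∑ j, B.mulVec (res I g) j * B.mulVec z j)
          + ∑ j, B.mulVec (res K g) j * B.mulVec z j := by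
      intro z
      rw [hF]
      simp only [hresIK, Matrix.mulVec_add, Pi.add_apply]
      rw [← Finset.sum_add_distrib]
      exact Finset.sum_congr rfl fun j _ => by ring
    have hIKle : nrm (res I g) + nrm (res K g) ≤ Real.sqrt 2 * u := by
      have h1 : nrm (res I g)^2 + nrm (res K g)^2 = u^2 := by
        rw [sq_nrm, sq_nrm, hu2, sum_sq_res, sum_sq_res, ← Finset.sum_union hdIK]
      have h2 : Real.sqrt 2 * Real.sqrt 2 = 2 := Real.mul_self_sqrt (by norm_num)
      have h3 : (nrm (res I g) + nrm (res K g))^2 ≤ (Real.sqrt 2 * u)^2 := by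
        nlinarith [sq_nonneg (nrm (res I g) - nrm (res K g))]
      have h4 : 0 ≤ nrm (res I g) + nrm (res K g) :=
        add_nonneg (nrm_nonneg _) (nrm_nonneg _)
      have h5 : 0 ≤ Real.sqrt 2 * u := mul_nonneg (Real.sqrt_nonneg 2) hu0
      calc nrm (res I g) + nrm (res K g)
          = Real.sqrt ((nrm (res I g) + nrm (res K g))^2) := (Real.sqrt_sq h4).symm
        _ ≤ Real.sqrt ((Real.sqrt 2 * u)^2) := Real.sqrt_le_sqrt h3
        _ = Real.sqrt 2 * u := Real.sqrt_sq h5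
    have hFsparse : ∀ K' ⊆ tl, K'.card ≤ k →
        |F (res K' g)| ≤ (Real.sqrt 2 * δ * u) * nrm (res K' g) := by
      intro K' hK'sub hK'card
      have hdIK' : Disjoint I K' := by
        rw [Finset.disjoint_left]
        intro p hp hp'
        exact (Finset.mem_compl.1 (Finset.mem_sdiff.1 (hK'sub hp')).1) hp
      have hdKK' : Disjoint K K' := by
        rw [Finset.disjoint_left]
        intro p hp hp'
        exact (Finset.mem_sdiff.1 (hK'sub hp')).2 hp
      have hro1 := restricted_orth B hB hdIK' (by omega) g g
      have hKlek : K.card ≤ k := by rw [hKcard]; exact min_le_left _ _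
      have hro2 := restricted_orth B hB hdKK' (by omega) g g
      rw [hsplit2]
      calc |_ + _| ≤ |∑ j, B.mulVec (res I g) j * B.mulVec (res K' g) j|
            + |∑ j, B.mulVec (res K g) j * B.mulVec (res K' g) j| := abs_add_le _ _
        _ ≤ δ * (nrm (res I g) * nrm (res K' g)) + δ * (nrm (res K g) * nrm (res K' g)) := by
            linarith [hro1, hro2]
        _ = δ * (nrm (res I g) + nrm (res K g)) * nrm (res K' g) := by ring
        _ ≤ δ * (Real.sqrt 2 * u) * nrm (res K' g) := by
            apply mul_le_mul_of_nonneg_right _ (nrm_nonneg _)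
            exact mul_le_mul_of_nonneg_left hIKle hδ0.le
        _ = (Real.sqrt 2 * δ * u) * nrm (res K' g) := by ring
    -- bound |F (res tl g)|
    have htail : |F (res tl g)| ≤ (Real.sqrt 2 * δ * u) * (L / Real.sqrt k) := by
      by_cases hIc : Iᶜ.card ≤ k
      · have hKeq : K = Iᶜ := Finset.eq_of_subset_of_card_le hKsub
          (by rw [hKcard]; omega)
        have : tl = ∅ := by rw [htl, hKeq, Finset.sdiff_self]
        rw [this]
        have hres0 : res (∅ : Finset (Fin P)) g = 0 := by funext p; simp [res]
        rw [hres0]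
        have hF0 : F 0 = 0 := by
          have := hFadd 0 0; simp at this; linarith
        rw [hF0]
        simp only [abs_zero]
        positivity
      · push_neg at hIc
        have hKk : K.card = k := by rw [hKcard]; omega
        set θ := (∑ q ∈ K, |g q|) / k with hθ
        have hθ0 : 0 ≤ θ := by
          apply div_nonneg _ (Nat.cast_nonneg k)
          exact Finset.sum_nonneg fun p _ => abs_nonneg _
        have hθbound : ∀ p ∈ tl, |g p| ≤ θ := by
          intro p hp
          have : (k:ℝ) * |g p| ≤ ∑ q ∈ K, |g q| := by
            calc (k:ℝ) * |g p| = ∑ _q ∈ K, |g p| := by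
                  rw [Finset.sum_const, nsmul_eq_mul, hKk]
              _ ≤ ∑ q ∈ K, |g q| := Finset.sum_le_sum (hKprop p hp)
          rw [hθ, le_div_iff₀ (show (0:ℝ) < k by exact_mod_cast hk)]
          linarith
        have := tail_bound hk F hFadd (Real.sqrt 2 * δ * u) (by positivity) g tl hFsparse
          tl.card tl Finset.Subset.rfl le_rfl θ hθ0 hθbound
        have hθk : Real.sqrt k * θ = (∑ q ∈ K, |g q|) / Real.sqrt k := by
          rw [hθ, eq_div_iff (ne_of_gt hsk)]
          field_simp
          linear_combination (∑ q ∈ K, |g q|) * hks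
        have hsum : (∑ q ∈ K, |g q|) + ∑ p ∈ tl, |g p| = L := by
          rw [hL, htl, add_comm, Finset.sum_sdiff_eq_sub hKsub]
          ring
        calc |F (res tl g)| ≤ (Real.sqrt 2 * δ * u) *
              (Real.sqrt k * θ + (∑ p ∈ tl, |g p|) / Real.sqrt k) := this
          _ = (Real.sqrt 2 * δ * u) * (L / Real.sqrt k) := by
              rw [hθk, ← hsum, add_div]
    -- RIP lower bound chain
    have hlow := (hB (res T01 g) (sparse_res hcardT01 g)).1
    have hupp := (hB (res T01 g) (sparse_res hcardT01 g)).2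
    have hBT : nrm (B.mulVec (res T01 g)) ≤ Real.sqrt (1+δ) * u := by
      apply nrm_le (by positivity)
      calc ∑ j, B.mulVec (res T01 g) j ^2 ≤ (1+δ) * ∑ p, res T01 g p ^2 := hupp
        _ = (Real.sqrt (1+δ) * u)^2 := by
            rw [mul_pow, Real.sq_sqrt (by linarith), hu, sq_nrm]
    have hchain : (1-δ) * u^2 ≤ u * (2*Real.sqrt (1+δ)*ε + Real.sqrt 2 * δ * (L / Real.sqrt k)) := by
      have e1 : ∑ j, B.mulVec (res T01 g) j ^2 = F g - F (res tl g) := by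
        have : F g = F (res T01 g) + F (res tl g) := by
          rw [← hFadd, hdecomp]
        rw [this]
        have h7 : F (res T01 g) = ∑ j, B.mulVec (res T01 g) j ^2 := by
          simp only [hF]
          exact Finset.sum_congr rfl fun j _ => by ring
        rw [h7]; ring
      have e2 : F g ≤ Real.sqrt (1+δ) * u * (2*ε) := by
        calc F g ≤ nrm (B.mulVec (res T01 g)) * nrm (B.mulVec g) := cs_sum _ _
          _ ≤ Real.sqrt (1+δ) * u * (2*ε) := by
              apply mul_le_mul hBT hg (nrm_nonneg _) (by positivity)
      have e3 : (1-δ) * u^2 ≤ ∑ j, B.mulVec (res T01 g) j ^2 := by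
        rw [hu, sq_nrm]; exact hlow
      have e4 : -F (res tl g) ≤ (Real.sqrt 2 * δ * u) * (L / Real.sqrt k) :=
        le_trans (neg_le_abs _) htail
      calc (1-δ) * u^2 ≤ F g - F (res tl g) := by rw [← e1]; exact e3
        _ ≤ Real.sqrt (1+δ) * u * (2*ε) + (Real.sqrt 2 * δ * u) * (L / Real.sqrt k) := by
            linarith
        _ = u * (2*Real.sqrt (1+δ)*ε + Real.sqrt 2 * δ * (L / Real.sqrt k)) := by ring
    have h1δ : (0:ℝ) < 1 - δ := by linarith
    rcases eq_or_lt_of_le hu0 with h0 | h0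
    · rw [← h0]
      apply add_nonneg
      · exact mul_nonneg (div_nonneg (by positivity) h1δ.le) hε
      · exact mul_nonneg (div_nonneg (by positivity) h1δ.le) (div_nonneg hL0 hsk.le)
    · have hdiv : u ≤ (2*Real.sqrt (1+δ)*ε + Real.sqrt 2 * δ * (L / Real.sqrt k)) / (1-δ) := by
        rw [le_div_iff₀ (by linarith)]
        have := hchain
        nlinarith
      calc u ≤ (2*Real.sqrt (1+δ)*ε + Real.sqrt 2 * δ * (L / Real.sqrt k)) / (1-δ) := hdiv
        _ = (2*Real.sqrt (1+δ)/(1-δ)) * ε + (Real.sqrt 2 * δ/(1-δ)) * (L / Real.sqrt k) := by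
            rw [add_div]
            ring
  · -- nrm g ≤ u + L/√k
    apply nrm_le (by positivity)
    have hsplitsum : ∑ p, g p ^2 = (∑ p ∈ T01, g p ^2) + ∑ p ∈ tl, g p ^2 := by
      rw [← Finset.sum_union hdT01tl, huniv]
    have htail2 : ∑ p ∈ tl, g p ^2 ≤ L^2 / k := by
      by_cases hIc : Iᶜ.card ≤ k
      · have hKeq : K = Iᶜ := Finset.eq_of_subset_of_card_le hKsub (by rw [hKcard]; omega)
        have : tl = ∅ := by rw [htl, hKeq, Finset.sdiff_self]
        rw [this]
        simp only [Finset.sum_empty]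
        positivity
      · push_neg at hIc
        have hKk : K.card = k := by rw [hKcard]; omega
        have hθbound : ∀ p ∈ tl, (k:ℝ) * |g p| ≤ ∑ q ∈ K, |g q| := by
          intro p hp
          calc (k:ℝ) * |g p| = ∑ _q ∈ K, |g p| := by
                rw [Finset.sum_const, nsmul_eq_mul, hKk]
            _ ≤ ∑ q ∈ K, |g q| := Finset.sum_le_sum (hKprop p hp)
        have hKL : ∑ q ∈ K, |g q| ≤ L := by
          rw [hL]
          apply Finset.sum_le_sum_of_subset_of_nonneg hKsub
          intro p _ _; exact abs_nonneg _
        have htlL : ∑ p ∈ tl, |g p| ≤ L := by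
          rw [hL]
          apply Finset.sum_le_sum_of_subset_of_nonneg (htl ▸ Finset.sdiff_subset)
          intro p _ _; exact abs_nonneg _
        have step1 : ∀ p ∈ tl, g p ^2 ≤ (L / k) * |g p| := by
          intro p hp
          have h1 := hθbound p hp
          have h2 : |g p| ≤ L / k := by
            rw [le_div_iff₀ (show (0:ℝ) < k by exact_mod_cast hk)]
            calc |g p| * k = k * |g p| := by ring
              _ ≤ ∑ q ∈ K, |g q| := h1
              _ ≤ L := hKL
          calc g p ^2 = |g p| * |g p| := by rw [← sq_abs]; ring
            _ ≤ (L/k) * |g p| := mul_le_mul_of_nonneg_right h2 (abs_nonneg _)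
        calc ∑ p ∈ tl, g p ^2 ≤ ∑ p ∈ tl, (L/k) * |g p| := Finset.sum_le_sum step1
          _ = (L/k) * ∑ p ∈ tl, |g p| := by rw [Finset.mul_sum]
          _ ≤ (L/k) * L := by
              apply mul_le_mul_of_nonneg_left htlL
              positivity
          _ = L^2/k := by ring
    have hLk : (L / Real.sqrt k)^2 = L^2 / k := by
      rw [div_pow]
      congr 1
      rw [sq]
      exact hks
    rw [hsplitsum, ← hu2]
    nlinarith [hu0, div_nonneg hL0 hsk.le, hLk]

lemma nrm_sub_rev {m : ℕ} (a b : Fin m → ℝ) :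
    nrm (fun j => a j - b j) = nrm (fun j => b j - a j) := by
  unfold nrm
  congr 1
  exact Finset.sum_congr rfl fun j _ => by ring

/-- ℓ¹–ℓ² bound on a set of size ≤ k. -/
lemma l1_le_sqrt_mul {k : ℕ} (S : Finset (Fin P)) (hS : S.card ≤ k) (v : Fin P → ℝ) :
    ∑ p ∈ S, |v p| ≤ Real.sqrt k * Real.sqrt (∑ p ∈ S, v p ^ 2) := by
  have h := Real.sum_mul_le_sqrt_mul_sqrt S (fun _ => (1:ℝ)) (fun p => |v p|)
  simp only [one_mul, one_pow, sq_abs] at h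
  calc ∑ p ∈ S, |v p| ≤ Real.sqrt (∑ _p ∈ S, (1:ℝ)) * Real.sqrt (∑ p ∈ S, v p ^2) := h
    _ ≤ Real.sqrt k * Real.sqrt (∑ p ∈ S, v p ^2) := by
        apply mul_le_mul_of_nonneg_right _ (Real.sqrt_nonneg _)
        apply Real.sqrt_le_sqrt
        rw [Finset.sum_const, nsmul_eq_mul, mul_one]
        exact_mod_cast hS

/-- cone piece : lower bound for the ℓ¹ norm of a perturbed vector. -/
lemma cone_piece (S : Finset (Fin P)) (xs xh : Fin P → ℝ) :
    (∑ p ∈ S, |xs p|) - (∑ p ∈ S, |xs p - xh p|)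
      + ((∑ p ∈ Sᶜ, |xs p - xh p|) - ∑ p ∈ Sᶜ, |xs p|) ≤ ∑ p, |xh p| := by
  rw [← Finset.sum_add_sum_compl S (fun p => |xh p|)]
  have h1 : (∑ p ∈ S, |xs p|) - (∑ p ∈ S, |xs p - xh p|) ≤ ∑ p ∈ S, |xh p| := by
    rw [← Finset.sum_sub_distrib]
    apply Finset.sum_le_sum
    intro p _
    have h3 : |xs p| ≤ |xs p - xh p| + |xh p| := by
      have h4 : |xs p - xh p + xh p| ≤ |xs p - xh p| + |xh p| := abs_add_le _ _
      have h5 : xs p - xh p + xh p = xs p := by ring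
      rw [h5] at h4
      exact h4
    linarith
  have h2 : (∑ p ∈ Sᶜ, |xs p - xh p|) - (∑ p ∈ Sᶜ, |xs p|) ≤ ∑ p ∈ Sᶜ, |xh p| := by
    rw [← Finset.sum_sub_distrib]
    apply Finset.sum_le_sum
    intro p _
    have h3 : |xs p - xh p| ≤ |xs p| + |xh p| := abs_sub _ _
    linarith
  linarith

end S14

open S14 in
set_option maxHeartbeats 1000000 in
/-- Average reconstruction error bound: if the sensing matrices `A^(t)` are
uniformly RIP of order `2k` with constant `δ < (4T)⁻¹`, the measurements are
`y^(t) = A^(t)x*^(t) + z^(t)` with `‖z^(t)‖₂ ≤ ε`, and `x̂` minimizes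
`‖x^(0)‖₁ + ‖∇ₜ x‖₁` over feasible movies, then for any pixel set `I` with
`|I| ≤ k`,
`(1/T)∑_t ‖x*^(t) - x̂^(t)‖₂ ≤ C(‖x*^(0)_{Iᶜ}‖₁ + ‖∇ₜ x*_{Īᶜ}‖₁)/√k + C'·T·ε`,
where the constants `C, C'` depend only on `δ` and `T·δ`. -/
theorem stmt_14 (T k : ℕ) [NeZero T] (hk : 0 < k) (δ : ℝ)
    (hδ0 : 0 < δ) (hδ : δ < (4 * (T : ℝ))⁻¹) :
    ∃ C C' : ℝ, 0 < C ∧ 0 < C' ∧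
      ∀ (P M : ℕ) (A : Fin T → Matrix (Fin M) (Fin P) ℝ)
        (xstar : Fin T → Fin P → ℝ) (zn : Fin T → Fin M → ℝ)
        (y : Fin T → Fin M → ℝ) (ε : ℝ) (xhat : Fin T → Fin P → ℝ)
        (I : Finset (Fin P)),
        0 ≤ ε →
        (∀ t, ∀ v : Fin P → ℝ, IsSparse (2 * k) v →
          (1 - δ) * ∑ p, v p ^ 2 ≤ ∑ j, (A t).mulVec v j ^ 2 ∧
            ∑ j, (A t).mulVec v j ^ 2 ≤ (1 + δ) * ∑ p, v p ^ 2) →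
        (∀ t, y t = (A t).mulVec (xstar t) + zn t) →
        (∀ t, Real.sqrt (∑ j, zn t j ^ 2) ≤ ε) →
        Feasible A y ε xhat →
        (∀ x : Fin T → Fin P → ℝ, Feasible A y ε x → Fobj xhat ≤ Fobj x) →
        I.card ≤ k →
        (1 / (T : ℝ)) * ∑ t : Fin T, Real.sqrt (∑ p, (xstar t p - xhat t p) ^ 2) ≤
          C * ((∑ p ∈ Iᶜ, |xstar 0 p|) +
              ∑ t : Fin (T - 1), ∑ p ∈ Iᶜ, |gradT xstar t p|) / Real.sqrt k +
            C' * T * ε := by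
  obtain ⟨n, rfl⟩ : ∃ n, T = n + 1 := ⟨T - 1, by have := NeZero.ne T; omega⟩
  -- basic numeric facts
  have hTR : (1:ℝ) ≤ ((n+1 : ℕ) : ℝ) := by exact_mod_cast Nat.one_le_iff_ne_zero.2 (by omega)
  have hTR0 : (0:ℝ) < ((n+1 : ℕ) : ℝ) := by linarith
  have hTne : ((n+1 : ℕ) : ℝ) ≠ 0 := ne_of_gt hTR0
  have hδT : δ * ((n+1 : ℕ) : ℝ) < 1/4 := by
    have h1 : δ * ((n+1 : ℕ):ℝ) < (4*((n+1 : ℕ):ℝ))⁻¹ * ((n+1 : ℕ):ℝ) :=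
      mul_lt_mul_of_pos_right hδ hTR0
    have e : (4*((n+1 : ℕ):ℝ))⁻¹ * ((n+1 : ℕ):ℝ) = 1/4 := by field_simp
    rw [e] at h1
    exact h1
  have hδ4 : δ < 1/4 := by nlinarith
  have hδ1 : δ < 1 := by linarith
  have h1δ : (0:ℝ) < 1 - δ := by linarith
  have hsqrt2 : Real.sqrt 2 < 1.5 := by
    rw [show (1.5:ℝ) = Real.sqrt (1.5^2) from (Real.sqrt_sq (by norm_num)).symm]
    apply Real.sqrt_lt_sqrt (by norm_num)
    norm_num
  have hsqrt2' : (0:ℝ) < Real.sqrt 2 := Real.sqrt_pos.2 (by norm_num)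
  -- constants
  set α := 2*Real.sqrt (1+δ)/(1-δ) with hα
  set β := Real.sqrt 2 * δ/(1-δ) with hβ
  set γ := 2*β*((n+1 : ℕ):ℝ) with hγdef
  have hα0 : 0 < α := by
    apply div_pos _ h1δ
    have : 0 < Real.sqrt (1+δ) := Real.sqrt_pos.2 (by linarith)
    linarith
  have hβ0 : 0 < β := by
    apply div_pos _ h1δ
    positivity
  have hγ0 : 0 < γ := by positivity
  have hγ1 : γ < 1 := by
    rw [hγdef, hβ]
    have e : 2*(Real.sqrt 2*δ/(1-δ))*((n+1 : ℕ):ℝ) =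
        (2*Real.sqrt 2*(δ*((n+1 : ℕ):ℝ)))/(1-δ) := by ring
    rw [e, div_lt_one h1δ]
    nlinarith [hδT, hsqrt2, mul_pos hδ0 hTR0, hsqrt2']
  have h1γ : (0:ℝ) < 1 - γ := by linarith
  refine ⟨(1+2*((n+1 : ℕ):ℝ))*γ/(((n+1 : ℕ):ℝ)*(1-γ)) + 2,
    (1+2*((n+1 : ℕ):ℝ))*α/((1-γ)*((n+1 : ℕ):ℝ)), ?_, ?_, ?_⟩
  · have : 0 < (1+2*((n+1 : ℕ):ℝ))*γ/(((n+1 : ℕ):ℝ)*(1-γ)) := by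
      apply div_pos (by nlinarith) (by nlinarith)
    linarith
  · apply div_pos (by nlinarith) (by nlinarith)
  intro P M A xstar zn y ε xhat I hε hA hy hz hfeas hmin hIk
  set C := (1+2*((n+1 : ℕ):ℝ))*γ/(((n+1 : ℕ):ℝ)*(1-γ)) + 2 with hC
  set C' := (1+2*((n+1 : ℕ):ℝ))*α/((1-γ)*((n+1 : ℕ):ℝ)) with hC'
  -- abbreviations
  set sk := Real.sqrt k with hsk
  have hsk0 : 0 < sk := Real.sqrt_pos.2 (by exact_mod_cast hk)
  have hskne : sk ≠ 0 := ne_of_gt hsk0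
  set g : Fin (n+1) → Fin P → ℝ := fun t p => xstar t p - xhat t p with hg
  set d : Fin (n+1-1) → Fin P → ℝ := fun t p => gradT xstar t p - gradT xhat t p with hd
  -- feasibility of xstar and minimality
  have hfeas_star : Feasible A y ε xstar := by
    intro t
    have e : ∀ j, (A t).mulVec (xstar t) j - y t j = -(zn t j) := by
      intro j; rw [hy t]; simp
    calc Real.sqrt (∑ j, ((A t).mulVec (xstar t) j - y t j)^2)
        = Real.sqrt (∑ j, zn t j ^2) := by
          congr 1
          exact Finset.sum_congr rfl fun j _ => by rw [e j]; ring
      _ ≤ ε := hz t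
  have hFle : Fobj xhat ≤ Fobj xstar := hmin xstar hfeas_star
  -- per-frame measurement residual
  have hBg : ∀ t, nrm ((A t).mulVec (g t)) ≤ 2*ε := by
    intro t
    have e : (A t).mulVec (g t) = (fun j => ((A t).mulVec (xstar t) j - y t j))
        + (fun j => (y t j - (A t).mulVec (xhat t) j)) := by
      funext j
      have e2 : g t = xstar t - xhat t := by funext p; simp [hg]
      rw [e2, Matrix.mulVec_sub]
      simp
    rw [e]
    have h1 : nrm (fun j => (A t).mulVec (xstar t) j - y t j) ≤ ε := hfeas_star t
    have h2 : nrm (fun j => y t j - (A t).mulVec (xhat t) j) ≤ ε := by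
      rw [nrm_sub_rev]
      exact hfeas t
    calc nrm _ ≤ nrm (fun j => (A t).mulVec (xstar t) j - y t j)
          + nrm (fun j => y t j - (A t).mulVec (xhat t) j) := nrm_add_le _ _
      _ ≤ 2*ε := by linarith only [h1, h2]
  -- frame estimates
  have hframe : ∀ t, ∃ u : ℝ, 0 ≤ u ∧ Real.sqrt (∑ p ∈ I, g t p ^2) ≤ u ∧
      u ≤ α * ε + β * ((∑ p ∈ Iᶜ, |g t p|)/sk) ∧
      nrm (g t) ≤ u + (∑ p ∈ Iᶜ, |g t p|)/sk := by
    intro t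
    obtain ⟨u, h0, h1, h2, h3⟩ := frame_est hk hδ0 hδ1 hε (A t) (hA t) (g t) (hBg t) I hIk
    refine ⟨u, h0, h1, ?_, h3⟩
    rw [hα, hβ]
    exact h2
  choose u hu0 huI huαβ hunrm using hframe
  set U := ∑ t, u t with hU
  set a : Fin (n+1) → ℝ := fun t => Real.sqrt (∑ p ∈ I, g t p ^2) with ha
  set W : Fin (n+1) → ℝ := fun t => ∑ p ∈ Iᶜ, |g t p| with hW
  -- ℓ¹ quantities
  set E0 := ∑ p ∈ Iᶜ, |xstar 0 p| with hE0
  set Eg := ∑ t : Fin (n+1-1), ∑ p ∈ Iᶜ, |gradT xstar t p| with hEg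
  set q0I := ∑ p ∈ I, |g 0 p| with hq0I
  set q0c := ∑ p ∈ Iᶜ, |g 0 p| with hq0c
  set QIg := ∑ t : Fin (n+1-1), ∑ p ∈ I, |d t p| with hQIg
  set Qcg := ∑ t : Fin (n+1-1), ∑ p ∈ Iᶜ, |d t p| with hQcg
  -- the cone inequality
  have hA1 : (∑ p ∈ I, |xstar 0 p|) - q0I + (q0c - E0) ≤ ∑ p, |xhat 0 p| :=
    cone_piece I (xstar 0) (xhat 0)
  have hA2 : ∀ t : Fin (n+1-1),
      (∑ p ∈ I, |gradT xstar t p|) - (∑ p ∈ I, |d t p|)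
        + ((∑ p ∈ Iᶜ, |d t p|) - ∑ p ∈ Iᶜ, |gradT xstar t p|) ≤ ∑ p, |gradT xhat t p| :=
    fun t => cone_piece I (gradT xstar t) (gradT xhat t)
  have hA2s : (∑ t : Fin (n+1-1), ∑ p ∈ I, |gradT xstar t p|) - QIg + (Qcg - Eg)
      ≤ ∑ t : Fin (n+1-1), ∑ p, |gradT xhat t p| := by
    have h := Finset.sum_le_sum (s := Finset.univ) (fun t _ => hA2 t)
    rw [Finset.sum_add_distrib, Finset.sum_sub_distrib, Finset.sum_sub_distrib] at h
    exact h
  have hFh : Fobj xhat = (∑ p, |xhat 0 p|) + ∑ t : Fin (n+1-1), ∑ p, |gradT xhat t p| := rfl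
  have hFs : Fobj xstar = (∑ p, |xstar 0 p|) + ∑ t : Fin (n+1-1), ∑ p, |gradT xstar t p| := rfl
  have hsplit0 : (∑ p ∈ I, |xstar 0 p|) + E0 = ∑ p, |xstar 0 p| :=
    Finset.sum_add_sum_compl I _
  have hsplitgs : (∑ t : Fin (n+1-1), ∑ p ∈ I, |gradT xstar t p|) + Eg
      = ∑ t : Fin (n+1-1), ∑ p, |gradT xstar t p| := by
    rw [hEg, ← Finset.sum_add_distrib]
    exact Finset.sum_congr rfl fun t _ => Finset.sum_add_sum_compl I _
  have hcone : q0c + Qcg ≤ q0I + QIg + 2*(E0 + Eg) := by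
    rw [hFh, hFs] at hFle
    linarith only [hA1, hA2s, hsplit0, hsplitgs, hFle]
  -- telescoping
  have htele : ∀ (t : Fin (n+1)) (p : Fin P),
      |g t p| ≤ |g 0 p| + ∑ s : Fin (n+1-1), |d s p| := by
    intro t p
    have claim : ∀ m (hmn : m < n+1), |g ⟨m,hmn⟩ p| ≤ |g 0 p|
        + ∑ s ∈ Finset.univ.filter (fun s : Fin (n+1-1) => s.1 < m), |d s p| := by
      intro m
      induction m with
      | zero =>
        intro hmn
        have hfe : Finset.univ.filter (fun s : Fin (n+1-1) => s.1 < 0) = ∅ := by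
          apply Finset.filter_false_of_mem; intro s _; omega
        rw [hfe, Finset.sum_empty, add_zero]
        have : (⟨0,hmn⟩ : Fin (n+1)) = 0 := by
          apply Fin.ext; simp
        rw [this]
      | succ m ih =>
        intro hmn
        have hmn' : m < n+1 := by omega
        have hmn'' : m < n+1-1 := by omega
        have hgstep : g ⟨m+1, hmn⟩ p = g ⟨m, hmn'⟩ p + d ⟨m, hmn''⟩ p := by
          simp only [hd, hg, gradT]
          ring
        have hfilter : Finset.univ.filter (fun s : Fin (n+1-1) => s.1 < m+1)
            = insert ⟨m, hmn''⟩ (Finset.univ.filter (fun s : Fin (n+1-1) => s.1 < m)) := by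
          ext s
          simp only [Finset.mem_insert, Finset.mem_filter, Finset.mem_univ, true_and]
          constructor
          · intro hs
            rcases Nat.lt_succ_iff_lt_or_eq.1 hs with h | h
            · exact Or.inr h
            · exact Or.inl (Fin.ext h)
          · rintro (rfl | hs)
            · exact Nat.lt_succ_self m
            · omega
        have hnotmem : (⟨m, hmn''⟩ : Fin (n+1-1)) ∉
            Finset.univ.filter (fun s : Fin (n+1-1) => s.1 < m) := by
          simp
        rw [hgstep, hfilter, Finset.sum_insert hnotmem]
        have h1 := abs_add_le (g ⟨m, hmn'⟩ p) (d ⟨m, hmn''⟩ p)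
        have h2 := ih hmn'
        linarith only [h1, h2]
    have he : t = ⟨t.1, t.2⟩ := by apply Fin.ext; rfl
    calc |g t p| = |g ⟨t.1, t.2⟩ p| := by rw [← he]
      _ ≤ |g 0 p| + ∑ s ∈ Finset.univ.filter (fun s : Fin (n+1-1) => s.1 < t.1), |d s p| :=
          claim t.1 t.2
      _ ≤ |g 0 p| + ∑ s : Fin (n+1-1), |d s p| := by
          apply add_le_add le_rfl
          apply Finset.sum_le_sum_of_subset_of_nonneg (Finset.filter_subset _ _)
          intro s _ _; exact abs_nonneg _
  have hWQc : ∀ t, W t ≤ q0c + Qcg := by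
    intro t
    calc W t ≤ ∑ p ∈ Iᶜ, (|g 0 p| + ∑ s : Fin (n+1-1), |d s p|) :=
          Finset.sum_le_sum (fun p _ => htele t p)
      _ = q0c + ∑ p ∈ Iᶜ, ∑ s : Fin (n+1-1), |d s p| := by rw [Finset.sum_add_distrib]
      _ = q0c + Qcg := by rw [Finset.sum_comm]
  -- ℓ¹–ℓ² (support) estimates
  have ha0 : ∀ t, 0 ≤ a t := fun t => Real.sqrt_nonneg _
  have hq0Ia : q0I ≤ sk * a 0 := l1_le_sqrt_mul I hIk (g 0)
  set asucc : Fin (n+1-1) → ℝ := fun t => a ⟨t.1+1, by omega⟩ with hasucc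
  set acast : Fin (n+1-1) → ℝ := fun t => a ⟨t.1, by omega⟩ with hacast
  have hQIga : ∀ t : Fin (n+1-1), ∑ p ∈ I, |d t p| ≤ sk * asucc t + sk * acast t := by
    intro t
    have h1 : ∀ p : Fin P, |d t p| ≤ |g ⟨t.1+1, by omega⟩ p| + |g ⟨t.1, by omega⟩ p| := by
      intro p
      have e : d t p = g ⟨t.1+1, by omega⟩ p - g ⟨t.1, by omega⟩ p := by
        simp only [hd, hg, gradT]
        ring
      rw [e]
      exact abs_sub _ _
    calc ∑ p ∈ I, |d t p|
        ≤ ∑ p ∈ I, (|g ⟨t.1+1, by omega⟩ p| + |g ⟨t.1, by omega⟩ p|) :=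
          Finset.sum_le_sum fun p _ => h1 p
      _ = (∑ p ∈ I, |g ⟨t.1+1, by omega⟩ p|) + ∑ p ∈ I, |g ⟨t.1, by omega⟩ p| :=
          Finset.sum_add_distrib
      _ ≤ sk * asucc t + sk * acast t :=
          add_le_add (l1_le_sqrt_mul I hIk _) (l1_le_sqrt_mul I hIk _)
  have hVsum1 : a 0 + ∑ t : Fin (n+1-1), asucc t = ∑ t : Fin (n+1), a t :=
    (Fin.sum_univ_succ a).symm
  have hVsum2 : (∑ t : Fin (n+1-1), acast t) + a (Fin.last n) = ∑ t : Fin (n+1), a t :=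
    (Fin.sum_univ_castSucc a).symm
  have hQI : q0I + QIg ≤ 2 * sk * ∑ t : Fin (n+1), a t := by
    have h1 : QIg ≤ sk * (∑ t : Fin (n+1-1), asucc t) + sk * (∑ t : Fin (n+1-1), acast t) := by
      calc QIg ≤ ∑ t : Fin (n+1-1), (sk * asucc t + sk * acast t) :=
            Finset.sum_le_sum fun t _ => hQIga t
        _ = sk * (∑ t : Fin (n+1-1), asucc t) + sk * (∑ t : Fin (n+1-1), acast t) := by
            rw [Finset.sum_add_distrib, Finset.mul_sum, Finset.mul_sum]
    have e : sk * a 0 + sk * (∑ t : Fin (n+1-1), asucc t) = sk * ∑ t : Fin (n+1), a t := by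
      rw [← hVsum1]; ring
    have hYle : (∑ t : Fin (n+1-1), acast t) ≤ ∑ t : Fin (n+1), a t := by
      have := ha0 (Fin.last n)
      linarith only [hVsum2, this]
    have e2 : sk * (∑ t : Fin (n+1-1), acast t) ≤ sk * ∑ t : Fin (n+1), a t :=
      mul_le_mul_of_nonneg_left hYle hsk0.le
    linarith only [hq0Ia, h1, e, e2]
  have hVU : (∑ t : Fin (n+1), a t) ≤ U := Finset.sum_le_sum fun t _ => huI t
  have hQc2 : q0c + Qcg ≤ 2*sk*U + 2*(E0 + Eg) := by
    have h1 : 2*sk*(∑ t : Fin (n+1), a t) ≤ 2*sk*U :=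
      mul_le_mul_of_nonneg_left hVU (by positivity)
    linarith only [hcone, hQI, h1]
  have hWs : (∑ t : Fin (n+1), W t) ≤ ((n+1 : ℕ):ℝ) * (q0c + Qcg) := by
    calc (∑ t : Fin (n+1), W t) ≤ ∑ _t : Fin (n+1), (q0c + Qcg) :=
          Finset.sum_le_sum fun t _ => hWQc t
      _ = ((n+1 : ℕ):ℝ) * (q0c + Qcg) := by
          rw [Finset.sum_const, nsmul_eq_mul]
          simp
  have hU1 : U ≤ ((n+1 : ℕ):ℝ) * (α*ε) + β * ((∑ t : Fin (n+1), W t)/sk) := by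
    calc U ≤ ∑ t : Fin (n+1), (α * ε + β * (W t/sk)) := Finset.sum_le_sum fun t _ => huαβ t
      _ = ((n+1 : ℕ):ℝ) * (α*ε) + β * ((∑ t : Fin (n+1), W t)/sk) := by
          rw [Finset.sum_add_distrib, Finset.sum_const, nsmul_eq_mul, ← Finset.mul_sum,
            ← Finset.sum_div]
          simp
  have hnum : (∑ t : Fin (n+1), W t)/sk ≤ (((n+1 : ℕ):ℝ)*(2*sk*U + 2*(E0+Eg)))/sk := by
    gcongr
    calc (∑ t : Fin (n+1), W t) ≤ ((n+1 : ℕ):ℝ) * (q0c + Qcg) := hWs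
      _ ≤ ((n+1 : ℕ):ℝ)*(2*sk*U + 2*(E0+Eg)) :=
          mul_le_mul_of_nonneg_left hQc2 (by positivity)
  have hU2 : U ≤ ((n+1 : ℕ):ℝ)*(α*ε) + γ*U + γ*((E0+Eg)/sk) := by
    have h2 : β * ((∑ t : Fin (n+1), W t)/sk)
        ≤ β * ((((n+1 : ℕ):ℝ)*(2*sk*U + 2*(E0+Eg)))/sk) :=
      mul_le_mul_of_nonneg_left hnum hβ0.le
    have e : β * ((((n+1 : ℕ):ℝ)*(2*sk*U + 2*(E0+Eg)))/sk) = γ*U + γ*((E0+Eg)/sk) := by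
      rw [hγdef]
      field_simp
    linarith only [hU1, h2, e]
  have hU3 : U ≤ (((n+1 : ℕ):ℝ)*(α*ε) + γ*((E0+Eg)/sk))/(1-γ) := by
    rw [le_div_iff₀ h1γ]
    linarith only [hU2]
  have hSg : (∑ t : Fin (n+1), Real.sqrt (∑ p, (xstar t p - xhat t p)^2))
      ≤ U + (∑ t : Fin (n+1), W t)/sk := by
    calc (∑ t : Fin (n+1), Real.sqrt (∑ p, (xstar t p - xhat t p)^2))
        ≤ ∑ t : Fin (n+1), (u t + W t/sk) := Finset.sum_le_sum fun t _ => hunrm t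
      _ = U + (∑ t : Fin (n+1), W t)/sk := by
          rw [Finset.sum_add_distrib, ← Finset.sum_div]
  have h1γne : (1-γ) ≠ 0 := ne_of_gt h1γ
  have hfin : (∑ t : Fin (n+1), Real.sqrt (∑ p, (xstar t p - xhat t p)^2))
      ≤ ((n+1 : ℕ):ℝ) * (C * (E0 + Eg) / sk + C' * ((n+1 : ℕ):ℝ) * ε) := by
    calc (∑ t : Fin (n+1), Real.sqrt (∑ p, (xstar t p - xhat t p)^2))
        ≤ U + (((n+1 : ℕ):ℝ)*(2*sk*U + 2*(E0+Eg)))/sk := by linarith only [hSg, hnum]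
      _ = (1+2*((n+1 : ℕ):ℝ))*U + 2*((n+1 : ℕ):ℝ)*((E0+Eg)/sk) := by
          field_simp
          ring
      _ ≤ (1+2*((n+1 : ℕ):ℝ))*((((n+1 : ℕ):ℝ)*(α*ε) + γ*((E0+Eg)/sk))/(1-γ))
            + 2*((n+1 : ℕ):ℝ)*((E0+Eg)/sk) := by
          have := mul_le_mul_of_nonneg_left hU3 (show (0:ℝ) ≤ 1+2*((n+1 : ℕ):ℝ) by linarith only [hTR])
          linarith only [this]
      _ = ((n+1 : ℕ):ℝ) * (C * (E0 + Eg) / sk + C' * ((n+1 : ℕ):ℝ) * ε) := by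
          rw [hC, hC']
          field_simp
          ring
  calc (1 / ((n+1 : ℕ):ℝ)) * (∑ t : Fin (n+1), Real.sqrt (∑ p, (xstar t p - xhat t p)^2))
      ≤ (1 / ((n+1 : ℕ):ℝ)) * (((n+1 : ℕ):ℝ) * (C * (E0 + Eg) / sk + C' * ((n+1 : ℕ):ℝ) * ε)) := by
        apply mul_le_mul_of_nonneg_left hfin (by positivity)
    _ = C * (E0 + Eg) / sk + C' * ((n+1 : ℕ):ℝ) * ε := by
        field_simp
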